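/- arXiv:1201.6425 — 5 statements merged into one kernel-verified Lean document; each statement's English description precedes it below -/
import Mathlib

section
/- Let $f(\alpha; p_1, p_2) = p_1 \log\frac{p_1}{\alpha p_1 + (1-\alpha)p_2} - p_2 \log\frac{p_2}{\alpha p_1 + (1-\alpha)p_2} - (p_1 - p_2)$ for $p_1, p_2, \alpha \in [0,1]$ (with natural logarithm and the convention $0 \log 0 = 0$). Then $f(1/e; p_1, p_2) \ge 0$ for all $p_1, p_2 \in [0,1]$, with equality if and only if $p_1 = p_2$ or $p_2 = 0$. -/
open BigOperators

/-- The function `f(α; p₁, p₂)` from Lemma 1, with natural logarithm.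
The convention `0 log 0 = 0` holds automatically since `Real.log 0 = 0`. -/
noncomputable def f (α p₁ p₂ : ℝ) : ℝ :=
  p₁ * Real.log (p₁ / (α * p₁ + (1 - α) * p₂))
    - p₂ * Real.log (p₂ / (α * p₁ + (1 - α) * p₂)) - (p₁ - p₂)

section Auxiliary

open MeasureTheory intervalIntegral




-- numeric bound: log(1 - 1/e) > -1/2
lemma log_one_sub_inv_e : -(1/2 : ℝ) < Real.log (1 - (Real.exp 1)⁻¹) := by
  have hE1 : (2.7182818283 : ℝ) < Real.exp 1 := Real.exp_one_gt_d9
  have hE2 : Real.exp 1 < 2.7182818286 := Real.exp_one_lt_d9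
  have hEpos : (0:ℝ) < Real.exp 1 := Real.exp_pos 1
  have haE : (Real.exp 1)⁻¹ * Real.exp 1 = 1 := inv_mul_cancel₀ (ne_of_gt hEpos)
  have hapos : (0:ℝ) < (Real.exp 1)⁻¹ := inv_pos.mpr hEpos
  have ha2 : (Real.exp 1)⁻¹ < 0.3678794412 := by nlinarith
  have h1a : (0:ℝ) < 1 - (Real.exp 1)⁻¹ := by nlinarith
  rw [Real.lt_log_iff_exp_lt h1a]
  have hs2 : Real.exp (1/2) * Real.exp (1/2) = Real.exp 1 := by
    rw [← Real.exp_add]; norm_num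
  have hspos : (0:ℝ) < Real.exp (1/2) := Real.exp_pos _
  have hsgt : (1.648 : ℝ) < Real.exp (1/2) := by nlinarith
  have hneg : Real.exp (-(1/2):ℝ) = (Real.exp (1/2))⁻¹ := by
    rw [Real.exp_neg]
  rw [hneg]
  have hinv : (Real.exp (1/2))⁻¹ * Real.exp (1/2) = 1 := inv_mul_cancel₀ (ne_of_gt hspos)
  have hipos : (0:ℝ) < (Real.exp (1/2))⁻¹ := inv_pos.mpr hspos
  nlinarith




-- t log t + 1 - t ≥ (1-t)^2/2 for 0 < t ≤ 1
lemma ilem_lt1 {t : ℝ} (h0 : 0 < t) (h1 : t ≤ 1) :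
    (1-t)^2/2 ≤ t * Real.log t + 1 - t := by
  have h0' : (0:ℝ) ∉ Set.uIcc t 1 := by
    rw [Set.uIcc_of_le h1]
    rintro ⟨h, -⟩; linarith
  have hInt2 : IntervalIntegrable Real.log volume t 1 := intervalIntegrable_log h0'
  have hInt1 : IntervalIntegrable (fun s : ℝ => s - 1) volume t 1 :=
    ((continuous_id.sub continuous_const)).intervalIntegrable _ _
  have hmono := intervalIntegral.integral_mono_on h1 hInt2 hInt1
      (fun s hs => Real.log_le_sub_one_of_pos (lt_of_lt_of_le h0 hs.1))
  rw [integral_log] at hmono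
  have hcalc : (∫ s in t..(1:ℝ), (s - 1)) = ((1:ℝ)^2 - t^2)/2 - (1 - t) * 1 := by
    rw [intervalIntegral.integral_sub (continuous_id'.intervalIntegrable _ _)
      (intervalIntegrable_const), integral_id, intervalIntegral.integral_const]
    simp
  rw [hcalc] at hmono
  simp only [Real.log_one] at hmono
  nlinarith [hmono]




-- chord: for t ≥ 1, (t-1) * log t / 2 ≤ t log t - t + 1
lemma chord_lemma {t : ℝ} (ht : 1 ≤ t) :
    (t-1) * Real.log t / 2 ≤ t * Real.log t - t + 1 := by
  rcases eq_or_lt_of_le ht with h | h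
  · rw [← h]; simp
  have htpos : (0:ℝ) < t := by linarith
  have h0' : (0:ℝ) ∉ Set.uIcc 1 t := by
    rw [Set.uIcc_of_le ht]; rintro ⟨h', -⟩; linarith
  have hInt2 : IntervalIntegrable Real.log volume 1 t := intervalIntegrable_log h0'
  have hInt1 : IntervalIntegrable (fun s : ℝ => (s - 1)/(t-1) * Real.log t) volume 1 t := by
    apply Continuous.intervalIntegrable
    continuity
  have hpt : ∀ s ∈ Set.Icc (1:ℝ) t, (s - 1)/(t-1) * Real.log t ≤ Real.log s := by
    intro s hs
    set lam := (s - 1)/(t-1) with hlam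
    have ht1 : (0:ℝ) < t - 1 := by linarith
    have hlam0 : 0 ≤ lam := div_nonneg (by linarith [hs.1]) (le_of_lt ht1)
    have hlam1 : lam ≤ 1 := by
      rw [hlam, div_le_one ht1]; linarith [hs.2]
    have hcc := (strictConcaveOn_log_Ioi.concaveOn).2 (Set.mem_Ioi.mpr one_pos)
      (Set.mem_Ioi.mpr htpos) (by linarith : (0:ℝ) ≤ 1 - lam) hlam0 (by ring)
    have hsum : (1 - lam) • (1:ℝ) + lam • t = s := by
      have : lam * (t - 1) = s - 1 := div_mul_cancel₀ _ (ne_of_gt ht1)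
      simp only [smul_eq_mul]; nlinarith [this]
    rw [hsum] at hcc
    simpa [smul_eq_mul] using hcc
  have hmono := intervalIntegral.integral_mono_on (le_of_lt h) hInt1 hInt2 hpt
  rw [integral_log] at hmono
  have hcalc : (∫ s in (1:ℝ)..t, (s - 1)/(t-1) * Real.log t)
      = (t - 1) * Real.log t / 2 := by
    have hfe : (fun s : ℝ => (s - 1)/(t-1) * Real.log t)
        = (fun s : ℝ => (Real.log t / (t-1)) * (s - 1)) := by
      funext s; ring
    rw [hfe, intervalIntegral.integral_const_mul]
    have h2 : (∫ s in (1:ℝ)..t, (s - 1)) = (t^2 - 1^2)/2 - (t - 1) * 1 := by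
      rw [intervalIntegral.integral_sub (continuous_id'.intervalIntegrable _ _)
        (intervalIntegrable_const), integral_id, intervalIntegral.integral_const]
      simp
    rw [h2]
    have ht1 : t - 1 ≠ 0 := by intro hc; linarith [h]
    field_simp
    ring
  rw [hcalc] at hmono
  simp only [Real.log_one] at hmono
  linarith

-- B2: for t ≥ 1, c > 0: (t-1)(log c + 1) - c log t ≤ t log t - t + 1
lemma B2_lemma {t c : ℝ} (ht : 1 ≤ t) (hc : 0 < c) :
    (t-1) * (Real.log c + 1) - c * Real.log t ≤ t * Real.log t - t + 1 := by
  rcases eq_or_lt_of_le ht with h | h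
  · rw [← h]; simp
  have htpos : (0:ℝ) < t := by linarith
  have h0' : (0:ℝ) ∉ Set.uIcc 1 t := by
    rw [Set.uIcc_of_le ht]; rintro ⟨h', -⟩; linarith
  have hInt2 : IntervalIntegrable Real.log volume 1 t := intervalIntegrable_log h0'
  have hInt1 : IntervalIntegrable (fun s : ℝ => Real.log c + 1 - c * (1/s)) volume 1 t := by
    apply ContinuousOn.intervalIntegrable
    apply ContinuousOn.sub continuousOn_const
    apply ContinuousOn.mul continuousOn_const
    apply ContinuousOn.div continuousOn_const continuousOn_id
    intro x hx
    rw [Set.uIcc_of_le ht] at hx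
    have := hx.1; intro hc0; simp only [id] at hc0; rw [hc0] at this; linarith
  have hpt : ∀ s ∈ Set.Icc (1:ℝ) t, Real.log c + 1 - c * (1/s) ≤ Real.log s := by
    intro s hs
    have hspos : (0:ℝ) < s := by linarith [hs.1]
    have hd : Real.log (c / s) ≤ c/s - 1 :=
      Real.log_le_sub_one_of_pos (div_pos hc hspos)
    rw [Real.log_div (ne_of_gt hc) (ne_of_gt hspos)] at hd
    have : c * (1/s) = c / s := by ring
    linarith [this ▸ hd]
  have hmono := intervalIntegral.integral_mono_on (le_of_lt h) hInt1 hInt2 hpt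
  rw [integral_log] at hmono
  have hcalc : (∫ s in (1:ℝ)..t, (Real.log c + 1 - c * (1/s)))
      = (t - 1) * (Real.log c + 1) - c * Real.log t := by
    have hInt3 : IntervalIntegrable (fun s : ℝ => (1:ℝ)/s) volume 1 t := by
      apply ContinuousOn.intervalIntegrable
      apply ContinuousOn.div continuousOn_const continuousOn_id
      intro x hx
      rw [Set.uIcc_of_le ht] at hx
      have := hx.1; intro hc0; simp only [id] at hc0; rw [hc0] at this; linarith
    rw [intervalIntegral.integral_sub intervalIntegrable_const (hInt3.const_mul c),
      intervalIntegral.integral_const, intervalIntegral.integral_const_mul,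
      integral_one_div h0']
    simp [smul_eq_mul]
    try ring
  rw [hcalc] at hmono
  simp only [Real.log_one] at hmono
  linarith




lemma expsq_lb : (7.389056098 : ℝ) < (Real.exp 1)^2 := by
  nlinarith [Real.exp_one_gt_d9, sq_nonneg (Real.exp 1 - 2.7182818283)]

lemma expsq_ub : (Real.exp 1)^2 < 7.3890561 := by
  nlinarith [Real.exp_one_lt_d9, Real.exp_pos 1, sq_nonneg (Real.exp 1 - 2.7182818286)]

lemma expcube_lb : (20.08553691 : ℝ) < (Real.exp 1)^3 := by
  nlinarith [Real.exp_one_gt_d9, expsq_lb,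
    mul_pos (sub_pos.mpr expsq_lb) (sub_pos.mpr Real.exp_one_gt_d9)]

lemma expcube_ub : (Real.exp 1)^3 < 20.08553693 := by
  nlinarith [Real.exp_one_lt_d9, expsq_ub, Real.exp_pos 1,
    mul_pos (sub_pos.mpr expsq_ub) (sub_pos.mpr Real.exp_one_lt_d9)]

lemma exp32_lb : (4.4816 : ℝ) < Real.exp (3/2) := by
  have hcc2 : Real.exp (3/2) * Real.exp (3/2) = Real.exp 1 ^ 3 := by
    rw [← Real.exp_add]
    rw [show (3:ℝ)/2 + 3/2 = ((3:ℕ):ℝ) by norm_num, ← Real.exp_one_pow]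
  nlinarith [expcube_lb, Real.exp_pos (3/2 : ℝ)]

lemma exp32_ub : Real.exp (3/2) < 4.4817 := by
  have hcc2 : Real.exp (3/2) * Real.exp (3/2) = Real.exp 1 ^ 3 := by
    rw [← Real.exp_add]
    rw [show (3:ℝ)/2 + 3/2 = ((3:ℕ):ℝ) by norm_num, ← Real.exp_one_pow]
  nlinarith [expcube_ub, Real.exp_pos (3/2 : ℝ)]

lemma inv_ub_lem {c d : ℝ} (hc1 : (4.4816:ℝ) < c) (hdc : d * c = 1) (hdpos : 0 < d) :
    d < 0.2231347 := by nlinarith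

lemma arith_H {t L M : ℝ} (hr3 : 4 < t) (h0 : 0 < t)
    (hl2 : (0.6931471803:ℝ) < M) (hlog4 : 2*M + 1 - 4/t ≤ L) :
    (Real.exp 1 - 1) * (t - 1) < L * t := by
  have hE2 : Real.exp 1 < 2.7182818286 := Real.exp_one_lt_d9
  have ht4 : t * (4/t) = 4 := by field_simp
  have hcoef : (0:ℝ) ≤ 2*M + 2 - Real.exp 1 := by nlinarith
  nlinarith [mul_le_mul_of_nonneg_left hlog4 (le_of_lt h0), ht4,
    mul_nonneg (by linarith : (0:ℝ) ≤ t - 4) hcoef]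

lemma arith_F {a t m : ℝ} (hr1 : 2.5 < t) (hr2 : t ≤ 3.5)
    (h1 : (a*t)*m ≤ (0.3678794412*t)*(0.3678794412*t + 0.6321205589))
    (h2 : (0:ℝ) ≤ (t - 2.5)*(3.5 - t)) :
    m * (a * t) < t - 1 := by
  nlinarith [h1, h2]

lemma arith_G {t m d : ℝ} (hr2 : 3.5 < t) (hr3 : t ≤ 4)
    (h1 : m * (1/2 + t*d) ≤ (0.3678794412*t + 0.6321205589) * (1/2 + t*0.2231347))
    (h2 : (0:ℝ) ≤ (t - 3.5)*(4 - t)) :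
    m * (1/2 + t * d) < t - 1 := by
  nlinarith [h1, h2]

set_option maxHeartbeats 1600000 in
lemma key_lemma {t : ℝ} (h0 : 0 < t) (hne : t ≠ 1) :
    0 < t * Real.log t - (t - 1)
      - (t - 1) * Real.log ((Real.exp 1)⁻¹ * t + 1 - (Real.exp 1)⁻¹) := by
  have hE1 : (2.7182818283 : ℝ) < Real.exp 1 := Real.exp_one_gt_d9
  have hE2 : Real.exp 1 < 2.7182818286 := Real.exp_one_lt_d9
  have hEpos : (0:ℝ) < Real.exp 1 := Real.exp_pos 1
  obtain ⟨a, ha_def⟩ : ∃ a : ℝ, a = (Real.exp 1)⁻¹ := ⟨_, rfl⟩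
  rw [← ha_def]
  have haE : a * Real.exp 1 = 1 := by rw [ha_def]; exact inv_mul_cancel₀ (ne_of_gt hEpos)
  have hapos : (0:ℝ) < a := by rw [ha_def]; exact inv_pos.mpr hEpos
  have hloga : Real.log a = -1 := by rw [ha_def, Real.log_inv, Real.log_exp]
  have ha1 : (0.3678794411 : ℝ) < a := by nlinarith
  have ha2 : a < (0.3678794412 : ℝ) := by nlinarith
  obtain ⟨m, hm_def⟩ : ∃ m : ℝ, m = a * t + 1 - a := ⟨_, rfl⟩
  rw [← hm_def]
  have hmpos : 0 < m := by rw [hm_def]; nlinarith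
  rcases lt_or_gt_of_ne hne with hlt | hgt
  · -- t < 1
    have hcc := (strictConcaveOn_log_Ioi.concaveOn).2 (Set.mem_Ioi.mpr one_pos)
      (Set.mem_Ioi.mpr (by nlinarith : (0:ℝ) < 1 - a)) (le_of_lt h0)
      (by linarith : (0:ℝ) ≤ 1 - t) (by ring)
    have hsum : t • (1:ℝ) + (1 - t) • (1 - a) = m := by
      simp only [smul_eq_mul]; rw [hm_def]; ring
    rw [hsum] at hcc
    simp only [Real.log_one, smul_eq_mul, mul_zero, zero_add] at hcc
    have hil := ilem_lt1 h0 (le_of_lt hlt)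
    have hloge : -(1/2 : ℝ) < Real.log (1 - a) := by rw [ha_def]; exact log_one_sub_inv_e
    have hmul : (1 - t) * ((1 - t) * Real.log (1 - a)) ≤ (1 - t) * Real.log m :=
      mul_le_mul_of_nonneg_left hcc (by linarith)
    nlinarith [mul_pos (mul_pos (sub_pos.mpr hlt) (sub_pos.mpr hlt))
      (by linarith : (0:ℝ) < 1/2 + Real.log (1 - a))]
  · -- t > 1
    have ht1 : (1:ℝ) ≤ t := le_of_lt hgt
    rcases le_or_gt t 2.5 with hr1 | hr1
    · -- region (1, 2.5]: chord
      have hmub : m ≤ 1 + 0.3678794412*(t-1) := by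
        have := mul_le_mul_of_nonneg_right (le_of_lt ha2) (by linarith : (0:ℝ) ≤ t - 1)
        rw [hm_def]; nlinarith
      have hmsq : m^2 ≤ (1 + 0.3678794412*(t-1))^2 := by
        apply pow_le_pow_left₀ (le_of_lt hmpos) hmub
      have hq : m^2 < t := by
        have hin : (0:ℝ) < 0.2642411176 - 0.13533529*(t-1) := by linarith
        nlinarith [mul_pos (sub_pos.mpr hgt) hin, sq_nonneg (t-1)]
      have hlt2 : Real.log (m^2) < Real.log t := Real.log_lt_log (by positivity) hq
      rw [Real.log_pow] at hlt2
      push_cast at hlt2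
      have hch := chord_lemma ht1
      have hfac : 0 < (t - 1) * (Real.log t / 2 - Real.log m) := by
        apply mul_pos (by linarith); linarith
      nlinarith [hch, hfac]
    · rcases le_or_gt t 3.5 with hr2 | hr2
      · -- region (2.5, 3.5]: tangent at e
        have hlog : Real.log t ≤ a * t := by
          have hd := Real.log_le_sub_one_of_pos (show (0:ℝ) < t * a by positivity)
          rw [Real.log_mul (ne_of_gt h0) (ne_of_gt hapos), hloga] at hd
          nlinarith
        have hq : m * (a * t) < t - 1 := by
          have hat : a*t ≤ 0.3678794412*t :=
            mul_le_mul_of_nonneg_right (le_of_lt ha2) (le_of_lt h0)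
          have hmub : m ≤ 0.3678794412*t + 0.6321205589 := by rw [hm_def]; linarith
          have h1 : (a*t)*m ≤ (0.3678794412*t)*(0.3678794412*t + 0.6321205589) :=
            mul_le_mul hat hmub (le_of_lt hmpos) (by positivity)
          have h2 : (0:ℝ) ≤ (t - 2.5)*(3.5 - t) := by nlinarith
          exact arith_F hr1 hr2 h1 h2
        have hb2 := B2_lemma ht1 hmpos
        have hml : m * Real.log t ≤ m * (a * t) :=
          mul_le_mul_of_nonneg_left hlog (le_of_lt hmpos)
        linarith
      · rcases le_or_gt t 4 with hr3 | hr3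
        · -- region (3.5, 4]: tangent at e^{3/2}
          obtain ⟨c, hc_def⟩ : ∃ c : ℝ, c = Real.exp (3/2) := ⟨_, rfl⟩
          have hcpos : 0 < c := by rw [hc_def]; exact Real.exp_pos _
          have hlogc : Real.log c = 3/2 := by rw [hc_def, Real.log_exp]
          have hcc2 : c * c = Real.exp 1 ^ 3 := by
            rw [hc_def, ← Real.exp_add]
            rw [show (3:ℝ)/2 + 3/2 = ((3:ℕ):ℝ) by norm_num, ← Real.exp_one_pow]
          have hc1 : (4.4816 : ℝ) < c := by rw [hc_def]; exact exp32_lb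
          obtain ⟨d, hd_def⟩ : ∃ d : ℝ, d = c⁻¹ := ⟨_, rfl⟩
          have hdc : d * c = 1 := by rw [hd_def]; exact inv_mul_cancel₀ (ne_of_gt hcpos)
          have hdpos : (0:ℝ) < d := by rw [hd_def]; exact inv_pos.mpr hcpos
          have hd1 : d < 0.2231347 := inv_ub_lem hc1 hdc hdpos
          have hlog : Real.log t ≤ 1/2 + t * d := by
            have hdd := Real.log_le_sub_one_of_pos (show (0:ℝ) < t / c by positivity)
            rw [Real.log_div (ne_of_gt h0) (ne_of_gt hcpos), hlogc] at hdd
            have : t / c = t * d := by rw [hd_def, div_eq_mul_inv]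
            rw [this] at hdd
            linarith
          have hq : m * (1/2 + t * d) < t - 1 := by
            have hat : a*t ≤ 0.3678794412*t :=
              mul_le_mul_of_nonneg_right (le_of_lt ha2) (le_of_lt h0)
            have hmub : m ≤ 0.3678794412*t + 0.6321205589 := by
              rw [hm_def]; linarith
            have htd : (0:ℝ) < t * d := mul_pos h0 hdpos
            have hfpos : (0:ℝ) < 1/2 + t * d := by linarith
            have h1 : m * (1/2 + t*d) ≤ (0.3678794412*t + 0.6321205589) * (1/2 + t*0.2231347) := by
              apply mul_le_mul hmub _ (le_of_lt hfpos) (by linarith)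
              have := mul_le_mul_of_nonneg_left (le_of_lt hd1) (le_of_lt h0)
              linarith
            have h2 : (0:ℝ) ≤ (t - 3.5)*(4 - t) := by nlinarith
            exact arith_G hr2 hr3 h1 h2
          have hb2 := B2_lemma ht1 hmpos
          have hml : m * Real.log t ≤ m * (1/2 + t * d) :=
            mul_le_mul_of_nonneg_left hlog (le_of_lt hmpos)
          linarith
        · -- region t > 4
          have hl2 : (0.6931471803 : ℝ) < Real.log 2 := Real.log_two_gt_d9
          have hlog4 : 2 * Real.log 2 + 1 - 4/t ≤ Real.log t := by
            have hd := Real.log_le_sub_one_of_pos (show (0:ℝ) < 4 / t by positivity)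
            rw [Real.log_div (by norm_num) (ne_of_gt h0)] at hd
            have h4 : Real.log 4 = 2 * Real.log 2 := by
              rw [show (4:ℝ) = 2^2 by norm_num, Real.log_pow]; push_cast; ring
            rw [h4] at hd
            linarith
          have hEa : a * (Real.exp 1 - 1) = 1 - a := by
            rw [mul_sub, haE, mul_one]
          have hmup : Real.log m ≤ Real.log t - 1 + (Real.exp 1 - 1) / t := by
            have hd := Real.log_le_sub_one_of_pos (show (0:ℝ) < m / (a * t) by positivity)
            rw [Real.log_div (ne_of_gt hmpos) (by positivity),
              Real.log_mul (ne_of_gt hapos) (ne_of_gt h0), hloga] at hd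
            have heq : m / (a*t) - 1 = (Real.exp 1 - 1)/t := by
              rw [hm_def]
              field_simp
              linear_combination (-1) * haE
            rw [heq] at hd
            linarith
          have hstep : (t - 1) * Real.log m ≤ (t - 1) * (Real.log t - 1 + (Real.exp 1 - 1)/t) :=
            mul_le_mul_of_nonneg_left hmup (by linarith)
          have hfin : (Real.exp 1 - 1) * (t - 1) / t < Real.log t := by
            rw [div_lt_iff₀ h0]
            exact arith_H hr3 h0 hl2 hlog4
          have hexp : (t - 1) * (Real.log t - 1 + (Real.exp 1 - 1)/t)
              = (t-1) * Real.log t - (t-1) + (Real.exp 1 - 1) * (t-1) / t := by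
            field_simp
          nlinarith [hstep, hfin]


end Auxiliary

/-- `f(1/e; p₁, p₂) ≥ 0` for all `p₁, p₂ ∈ [0,1]`, with equality iff
`p₁ = p₂` or `p₂ = 0`. -/
theorem f_at_inv_e_nonneg (p₁ p₂ : ℝ)
    (hp₁ : p₁ ∈ Set.Icc (0 : ℝ) 1) (hp₂ : p₂ ∈ Set.Icc (0 : ℝ) 1) :
    0 ≤ f (Real.exp 1)⁻¹ p₁ p₂ ∧
      (f (Real.exp 1)⁻¹ p₁ p₂ = 0 ↔ p₁ = p₂ ∨ p₂ = 0) := by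
  obtain ⟨hp1l, hp1u⟩ := hp₁
  obtain ⟨hp2l, hp2u⟩ := hp₂
  have hEpos : (0:ℝ) < Real.exp 1 := Real.exp_pos 1
  have hE1 : (1:ℝ) < Real.exp 1 := by nlinarith [Real.exp_one_gt_d9]
  have hapos : (0:ℝ) < (Real.exp 1)⁻¹ := inv_pos.mpr hEpos
  have haE : (Real.exp 1)⁻¹ * Real.exp 1 = 1 := inv_mul_cancel₀ (ne_of_gt hEpos)
  have h1a : (0:ℝ) < 1 - (Real.exp 1)⁻¹ := by nlinarith
  have hzero : (p₁ = p₂ ∨ p₂ = 0) → f (Real.exp 1)⁻¹ p₁ p₂ = 0 := by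
    rintro (rfl | rfl)
    · unfold f; ring
    · by_cases hp1 : p₁ = 0
      · subst hp1; unfold f; norm_num
      · unfold f
        have h1 : (Real.exp 1)⁻¹ * p₁ + (1 - (Real.exp 1)⁻¹) * 0 = (Real.exp 1)⁻¹ * p₁ := by
          ring
        rw [h1]
        have h2 : p₁ / ((Real.exp 1)⁻¹ * p₁) = Real.exp 1 := by
          field_simp
        rw [h2, Real.log_exp]
        simp
  by_cases hc : p₁ = p₂ ∨ p₂ = 0
  · have h0 := hzero hc
    exact ⟨le_of_eq h0.symm, ⟨fun _ => hc, fun _ => h0⟩⟩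
  · push_neg at hc
    obtain ⟨hne, h2ne⟩ := hc
    have hp2 : 0 < p₂ := lt_of_le_of_ne hp2l (Ne.symm h2ne)
    have hpos : 0 < f (Real.exp 1)⁻¹ p₁ p₂ := by
      rcases eq_or_lt_of_le hp1l with hp1 | hp1
      · -- p₁ = 0
        rw [← hp1]
        unfold f
        have h1 : (Real.exp 1)⁻¹ * 0 + (1 - (Real.exp 1)⁻¹) * p₂
            = (1 - (Real.exp 1)⁻¹) * p₂ := by ring
        rw [h1]
        have h2 : p₂ / ((1 - (Real.exp 1)⁻¹) * p₂) = (1 - (Real.exp 1)⁻¹)⁻¹ := by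
          field_simp
        rw [h2, Real.log_inv]
        have hl := log_one_sub_inv_e
        have := mul_pos hp2 (by linarith : (0:ℝ) < Real.log (1 - (Real.exp 1)⁻¹) + 1)
        nlinarith [this]
      · -- p₁ > 0
        set t : ℝ := p₁ / p₂ with ht_def
        have ht0 : 0 < t := div_pos hp1 hp2
        have htne : t ≠ 1 := by
          rw [ht_def]
          intro hcon
          rw [div_eq_one_iff_eq (ne_of_gt hp2)] at hcon
          exact hne hcon
        have key := key_lemma ht0 htne
        set M : ℝ := (Real.exp 1)⁻¹ * t + 1 - (Real.exp 1)⁻¹ with hM_def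
        have hMpos : 0 < M := by
          rw [hM_def]
          nlinarith [mul_pos hapos ht0]
        have hm_eq : (Real.exp 1)⁻¹ * p₁ + (1 - (Real.exp 1)⁻¹) * p₂ = p₂ * M := by
          rw [hM_def, ht_def]
          field_simp
          ring
        unfold f
        rw [hm_eq]
        have h1 : p₁ / (p₂ * M) = t / M := by
          rw [ht_def, div_div]
        have h2 : p₂ / (p₂ * M) = M⁻¹ := by
          rw [div_mul_eq_div_div, div_self (ne_of_gt hp2), one_div]
        rw [h1, h2, Real.log_div (ne_of_gt ht0) (ne_of_gt hMpos), Real.log_inv]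
        have hpt : p₂ * t = p₁ := by
          rw [ht_def]; field_simp
        rw [← hpt]
        nlinarith [mul_pos hp2 key]
    refine ⟨le_of_lt hpos, ⟨fun h0 => absurd h0 (ne_of_gt hpos), fun hh => ?_⟩⟩
    rcases hh with hh | hh
    · exact absurd hh hne
    · exact absurd hh h2ne
end

section
/- Let $P_1$ and $P_2$ be probability distributions on a finite set $\mathcal{Y}$ with $P_1 \ne P_2$, and let $Q_{1/e}(y) = \frac{1}{e} P_1(y) + (1 - \frac{1}{e}) P_2(y)$. Then $D(P_1 \| Q_{1/e}) - D(P_2 \| Q_{1/e}) > 0$. -/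
open BigOperators

noncomputable def klF (b : ℝ) : ℝ → ℝ :=
  fun a => a * Real.log a - b * Real.log b
    - (a - b) * Real.log ((Real.exp 1)⁻¹ * a + (1 - (Real.exp 1)⁻¹) * b) - (a - b)

lemma two_lt_E : (2:ℝ) < Real.exp 1 := by
  have := Real.exp_one_gt_d9; linarith

lemma Epos : (0:ℝ) < Real.exp 1 := Real.exp_pos 1

lemma Einv_pos : (0:ℝ) < (Real.exp 1)⁻¹ := by positivity

lemma Einv_lt_half : (Real.exp 1)⁻¹ < 1/2 := by
  have h := two_lt_E
  have h2 : Real.exp 1 * (Real.exp 1)⁻¹ = 1 := mul_inv_cancel₀ (ne_of_gt Epos)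
  nlinarith [Einv_pos, mul_pos (sub_pos.mpr two_lt_E) Einv_pos]

lemma one_sub_Einv_pos : (0:ℝ) < 1 - (Real.exp 1)⁻¹ := by
  have := Einv_lt_half; linarith

lemma qpos {a b : ℝ} (ha : 0 ≤ a) (hb : 0 < b) :
    0 < (Real.exp 1)⁻¹ * a + (1 - (Real.exp 1)⁻¹) * b :=
  add_pos_of_nonneg_of_pos (mul_nonneg Einv_pos.le ha) (mul_pos one_sub_Einv_pos hb)

lemma log_chord_gt {r : ℝ} (h1 : 1 < r) (h2 : r < Real.exp 1) :
    (r - 1) / (Real.exp 1 - 1) < Real.log r := by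
  have hE1 : (1:ℝ) < Real.exp 1 := by have := two_lt_E; linarith
  have hd : (0:ℝ) < Real.exp 1 - 1 := by linarith
  have ht : 0 < (Real.exp 1 - r) / (Real.exp 1 - 1) := div_pos (by linarith) hd
  have hs : 0 < (r - 1) / (Real.exp 1 - 1) := div_pos (by linarith) hd
  have hts : (Real.exp 1 - r)/(Real.exp 1 - 1) + (r - 1)/(Real.exp 1 - 1) = 1 := by
    field_simp; ring
  have key := strictConcaveOn_log_Ioi.2 (Set.mem_Ioi.mpr one_pos)
      (Set.mem_Ioi.mpr (by linarith : (0:ℝ) < Real.exp 1))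
      (by linarith : (1:ℝ) ≠ Real.exp 1) ht hs hts
  rw [smul_eq_mul, smul_eq_mul, smul_eq_mul, smul_eq_mul] at key
  have h3 : (Real.exp 1 - r)/(Real.exp 1 - 1) * 1 + (r - 1)/(Real.exp 1 - 1) * Real.exp 1 = r := by
    field_simp; ring
  rw [h3, Real.log_one, Real.log_exp] at key
  linarith

lemma log_chord_lt {r : ℝ} (h0 : 0 < r) (h1 : r < 1) :
    Real.log r < (r - 1) / (Real.exp 1 - 1) := by
  have hE1 : (1:ℝ) < Real.exp 1 := by have := two_lt_E; linarith
  have hEr : 0 < Real.exp 1 - r := by linarith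
  have hd : (0:ℝ) < Real.exp 1 - 1 := by linarith
  have ht : 0 < (Real.exp 1 - 1) / (Real.exp 1 - r) := div_pos hd hEr
  have hs : 0 < (1 - r) / (Real.exp 1 - r) := div_pos (by linarith) hEr
  have hts : (Real.exp 1 - 1)/(Real.exp 1 - r) + (1 - r)/(Real.exp 1 - r) = 1 := by
    field_simp; ring
  have key := strictConcaveOn_log_Ioi.2 (Set.mem_Ioi.mpr h0)
      (Set.mem_Ioi.mpr (by linarith : (0:ℝ) < Real.exp 1))
      (by linarith : r ≠ Real.exp 1) ht hs hts
  rw [smul_eq_mul, smul_eq_mul, smul_eq_mul, smul_eq_mul] at key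
  have h3 : (Real.exp 1 - 1)/(Real.exp 1 - r) * r + (1 - r)/(Real.exp 1 - r) * Real.exp 1 = 1 := by
    field_simp; ring
  rw [h3, Real.log_one, Real.log_exp] at key
  -- key : (E-1)/(E-r) * log r + (1-r)/(E-r) * 1 < 0
  have h6 : ((Real.exp 1 - 1) / (Real.exp 1 - r) * Real.log r
      + (1 - r) / (Real.exp 1 - r) * 1) * (Real.exp 1 - r)
      = (Real.exp 1 - 1) * Real.log r + (1 - r) := by
    field_simp
  have h7 := mul_neg_of_neg_of_pos key hEr
  rw [h6] at h7
  rw [lt_div_iff₀ hd]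
  linarith

lemma klF_hasDerivAt {b a : ℝ} (hb : 0 < b) (ha : 0 < a) :
    HasDerivAt (klF b)
      (Real.log a - Real.log ((Real.exp 1)⁻¹ * a + (1 - (Real.exp 1)⁻¹) * b)
        - (a - b) * ((Real.exp 1)⁻¹ / ((Real.exp 1)⁻¹ * a + (1 - (Real.exp 1)⁻¹) * b))) a := by
  have hq : 0 < (Real.exp 1)⁻¹ * a + (1 - (Real.exp 1)⁻¹) * b := qpos ha.le hb
  have h1 : HasDerivAt (fun x : ℝ => (Real.exp 1)⁻¹ * x + (1 - (Real.exp 1)⁻¹) * b)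
      ((Real.exp 1)⁻¹) a := by
    simpa using ((hasDerivAt_id a).const_mul ((Real.exp 1)⁻¹)).add_const
      ((1 - (Real.exp 1)⁻¹) * b)
  have h2 := h1.log hq.ne'
  have h3 : HasDerivAt (fun x : ℝ => x - b) 1 a := (hasDerivAt_id a).sub_const b
  have h4 := h3.mul h2
  have h5 := Real.hasDerivAt_mul_log ha.ne'
  have h6 := ((h5.sub_const (b * Real.log b)).sub h4).sub h3
  exact h6.congr_deriv (by ring)

lemma klF_deriv_pos {b a : ℝ} (hb : 0 < b) (hab : b < a) :
    0 < Real.log a - Real.log ((Real.exp 1)⁻¹ * a + (1 - (Real.exp 1)⁻¹) * b)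
        - (a - b) * ((Real.exp 1)⁻¹ / ((Real.exp 1)⁻¹ * a + (1 - (Real.exp 1)⁻¹) * b)) := by
  have ha : 0 < a := lt_trans hb hab
  have hq : 0 < (Real.exp 1)⁻¹ * a + (1 - (Real.exp 1)⁻¹) * b := qpos ha.le hb
  have hE : Real.exp 1 * (Real.exp 1)⁻¹ = 1 := mul_inv_cancel₀ (ne_of_gt Epos)
  have hE1 : (1:ℝ) < Real.exp 1 := by have := two_lt_E; linarith
  have hd0 : Real.exp 1 - 1 ≠ 0 := by linarith
  have hE0 : Real.exp 1 ≠ 0 := ne_of_gt Epos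
  have hsub : a - ((Real.exp 1)⁻¹ * a + (1 - (Real.exp 1)⁻¹) * b)
      = (1 - (Real.exp 1)⁻¹) * (a - b) := by ring
  have hqa : (Real.exp 1)⁻¹ * a + (1 - (Real.exp 1)⁻¹) * b < a := by
    have := mul_pos one_sub_Einv_pos (sub_pos.mpr hab)
    linarith [hsub]
  have hr1 : 1 < a / ((Real.exp 1)⁻¹ * a + (1 - (Real.exp 1)⁻¹) * b) := (one_lt_div hq).mpr hqa
  have hEq : Real.exp 1 * ((Real.exp 1)⁻¹ * a + (1 - (Real.exp 1)⁻¹) * b)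
      = a + (Real.exp 1 - 1) * b := by field_simp
  have hr2 : a / ((Real.exp 1)⁻¹ * a + (1 - (Real.exp 1)⁻¹) * b) < Real.exp 1 := by
    rw [div_lt_iff₀ hq]
    nlinarith [mul_pos (sub_pos.mpr hE1) hb]
  have key := log_chord_gt hr1 hr2
  have hlog : Real.log (a / ((Real.exp 1)⁻¹ * a + (1 - (Real.exp 1)⁻¹) * b))
      = Real.log a - Real.log ((Real.exp 1)⁻¹ * a + (1 - (Real.exp 1)⁻¹) * b) :=
    Real.log_div ha.ne' hq.ne'
  have heq : (a - b) * ((Real.exp 1)⁻¹ / ((Real.exp 1)⁻¹ * a + (1 - (Real.exp 1)⁻¹) * b))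
      = (a / ((Real.exp 1)⁻¹ * a + (1 - (Real.exp 1)⁻¹) * b) - 1) / (Real.exp 1 - 1) := by
    have h1 : a / ((Real.exp 1)⁻¹ * a + (1 - (Real.exp 1)⁻¹) * b) - 1
        = ((1 - (Real.exp 1)⁻¹) * (a - b)) / ((Real.exp 1)⁻¹ * a + (1 - (Real.exp 1)⁻¹) * b) := by
      rw [div_sub_one hq.ne', hsub]
    rw [h1, div_div, ← mul_div_assoc,
      div_eq_div_iff hq.ne' (mul_ne_zero hq.ne' hd0)]
    linear_combination (a - b) * ((Real.exp 1)⁻¹ * a + (1 - (Real.exp 1)⁻¹) * b) * hE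
  rw [hlog] at key
  rw [heq]
  linarith

lemma klF_deriv_neg {b a : ℝ} (hb : 0 < b) (ha : 0 < a) (hab : a < b) :
    Real.log a - Real.log ((Real.exp 1)⁻¹ * a + (1 - (Real.exp 1)⁻¹) * b)
        - (a - b) * ((Real.exp 1)⁻¹ / ((Real.exp 1)⁻¹ * a + (1 - (Real.exp 1)⁻¹) * b)) < 0 := by
  have hq : 0 < (Real.exp 1)⁻¹ * a + (1 - (Real.exp 1)⁻¹) * b := qpos ha.le hb
  have hE : Real.exp 1 * (Real.exp 1)⁻¹ = 1 := mul_inv_cancel₀ (ne_of_gt Epos)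
  have hE1 : (1:ℝ) < Real.exp 1 := by have := two_lt_E; linarith
  have hd0 : Real.exp 1 - 1 ≠ 0 := by linarith
  have hE0 : Real.exp 1 ≠ 0 := ne_of_gt Epos
  have hsub : a - ((Real.exp 1)⁻¹ * a + (1 - (Real.exp 1)⁻¹) * b)
      = (1 - (Real.exp 1)⁻¹) * (a - b) := by ring
  have hqa : a < (Real.exp 1)⁻¹ * a + (1 - (Real.exp 1)⁻¹) * b := by
    have := mul_pos one_sub_Einv_pos (sub_pos.mpr hab)
    nlinarith [hsub]
  have hr0 : 0 < a / ((Real.exp 1)⁻¹ * a + (1 - (Real.exp 1)⁻¹) * b) := div_pos ha hq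
  have hr1 : a / ((Real.exp 1)⁻¹ * a + (1 - (Real.exp 1)⁻¹) * b) < 1 := (div_lt_one hq).mpr hqa
  have key := log_chord_lt hr0 hr1
  have hlog : Real.log (a / ((Real.exp 1)⁻¹ * a + (1 - (Real.exp 1)⁻¹) * b))
      = Real.log a - Real.log ((Real.exp 1)⁻¹ * a + (1 - (Real.exp 1)⁻¹) * b) :=
    Real.log_div ha.ne' hq.ne'
  have heq : (a - b) * ((Real.exp 1)⁻¹ / ((Real.exp 1)⁻¹ * a + (1 - (Real.exp 1)⁻¹) * b))
      = (a / ((Real.exp 1)⁻¹ * a + (1 - (Real.exp 1)⁻¹) * b) - 1) / (Real.exp 1 - 1) := by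
    have h1 : a / ((Real.exp 1)⁻¹ * a + (1 - (Real.exp 1)⁻¹) * b) - 1
        = ((1 - (Real.exp 1)⁻¹) * (a - b)) / ((Real.exp 1)⁻¹ * a + (1 - (Real.exp 1)⁻¹) * b) := by
      rw [div_sub_one hq.ne', hsub]
    rw [h1, div_div, ← mul_div_assoc,
      div_eq_div_iff hq.ne' (mul_ne_zero hq.ne' hd0)]
    linear_combination (a - b) * ((Real.exp 1)⁻¹ * a + (1 - (Real.exp 1)⁻¹) * b) * hE
  rw [hlog] at key
  rw [heq]
  linarith

lemma klF_self (b : ℝ) : klF b b = 0 := by unfold klF; ring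

lemma klF_zero {b : ℝ} (hb : 0 < b) : 0 < klF b 0 := by
  have hlog : Real.log ((Real.exp 1)⁻¹ * 0 + (1 - (Real.exp 1)⁻¹) * b)
      = Real.log (1 - (Real.exp 1)⁻¹) + Real.log b := by
    rw [mul_zero, zero_add, Real.log_mul one_sub_Einv_pos.ne' hb.ne']
  have h1 : klF b 0 = b * (1 + Real.log (1 - (Real.exp 1)⁻¹)) := by
    unfold klF
    rw [hlog, Real.log_zero]
    ring
  have h2 : (-1 : ℝ) < Real.log (1 - (Real.exp 1)⁻¹) := by
    rw [Real.lt_log_iff_exp_lt one_sub_Einv_pos, Real.exp_neg]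
    have := Einv_lt_half; linarith
  rw [h1]
  exact mul_pos hb (by linarith)

lemma klF_pos {b a : ℝ} (hb : 0 < b) (ha : 0 ≤ a) (hab : a ≠ b) : 0 < klF b a := by
  rcases eq_or_lt_of_le ha with h0 | ha0
  · rw [← h0]; exact klF_zero hb
  · rcases lt_or_gt_of_ne hab with h | h
    · -- 0 < a < b : klF b strictly anti on [a, b]
      have cont : ContinuousOn (klF b) (Set.Icc a b) := fun x hx =>
        ((klF_hasDerivAt hb (lt_of_lt_of_le ha0 hx.1)).continuousAt).continuousWithinAt
      have hder : ∀ x ∈ interior (Set.Icc a b), deriv (klF b) x < 0 := by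
        intro x hx
        rw [interior_Icc] at hx
        have hx0 : 0 < x := lt_trans ha0 hx.1
        rw [(klF_hasDerivAt hb hx0).deriv]
        exact klF_deriv_neg hb hx0 hx.2
      have anti := strictAntiOn_of_deriv_neg (convex_Icc a b) cont hder
      have := anti (Set.mem_Icc.mpr ⟨le_refl a, h.le⟩) (Set.mem_Icc.mpr ⟨h.le, le_refl b⟩) h
      rw [klF_self] at this
      linarith
    · -- b < a : klF b strictly mono on [b, a]
      have cont : ContinuousOn (klF b) (Set.Icc b a) := fun x hx =>
        ((klF_hasDerivAt hb (lt_of_lt_of_le hb hx.1)).continuousAt).continuousWithinAt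
      have hder : ∀ x ∈ interior (Set.Icc b a), 0 < deriv (klF b) x := by
        intro x hx
        rw [interior_Icc] at hx
        rw [(klF_hasDerivAt hb (lt_trans hb hx.1)).deriv]
        exact klF_deriv_pos hb hx.1
      have mono := strictMonoOn_of_deriv_pos (convex_Icc b a) cont hder
      have := mono (Set.mem_Icc.mpr ⟨le_refl b, h.le⟩) (Set.mem_Icc.mpr ⟨h.le, le_refl a⟩) h
      rw [klF_self] at this
      linarith

lemma pointwise_eq {a b : ℝ} (ha : 0 ≤ a) (hb : 0 < b) :
    a * Real.log (a / ((Real.exp 1)⁻¹ * a + (1 - (Real.exp 1)⁻¹) * b))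
      - b * Real.log (b / ((Real.exp 1)⁻¹ * a + (1 - (Real.exp 1)⁻¹) * b))
      - (a - b) = klF b a := by
  have hq : 0 < (Real.exp 1)⁻¹ * a + (1 - (Real.exp 1)⁻¹) * b := qpos ha hb
  rcases eq_or_lt_of_le ha with h0 | ha0
  · subst h0
    rw [Real.log_div hb.ne' hq.ne']
    unfold klF
    ring
  · rw [Real.log_div ha0.ne' hq.ne', Real.log_div hb.ne' hq.ne']
    unfold klF
    ring

lemma pointwise_lt {a b : ℝ} (ha : 0 ≤ a) (hb : 0 < b) (hne : a ≠ b) :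
    a - b < a * Real.log (a / ((Real.exp 1)⁻¹ * a + (1 - (Real.exp 1)⁻¹) * b))
      - b * Real.log (b / ((Real.exp 1)⁻¹ * a + (1 - (Real.exp 1)⁻¹) * b)) := by
  have h1 := klF_pos hb ha hne
  have h2 := pointwise_eq ha hb
  linarith

lemma pointwise_le {a b : ℝ} (ha : 0 ≤ a) (hb : 0 ≤ b) :
    a - b ≤ a * Real.log (a / ((Real.exp 1)⁻¹ * a + (1 - (Real.exp 1)⁻¹) * b))
      - b * Real.log (b / ((Real.exp 1)⁻¹ * a + (1 - (Real.exp 1)⁻¹) * b)) := by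
  rcases eq_or_lt_of_le hb with hb0 | hb0
  · rw [← hb0]
    rcases eq_or_lt_of_le ha with ha0 | ha0
    · rw [← ha0]; simp
    · have h1 : a / ((Real.exp 1)⁻¹ * a + (1 - (Real.exp 1)⁻¹) * 0) = Real.exp 1 := by
        rw [mul_zero, add_zero]
        field_simp
      rw [h1, Real.log_exp]
      simp
  · rcases eq_or_ne a b with hab | hab
    · rw [hab]; simp
    · exact (pointwise_lt ha hb0 hab).le

/-- For any two distinct probability distributions `P₁ ≠ P₂` on a finite set `Y`,
with `Q = (1/e) P₁ + (1 - 1/e) P₂`, one has `D(P₁ ‖ Q) - D(P₂ ‖ Q) > 0`. -/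
theorem kl_sub_kl_pos_at_inv_e {Y : Type*} [Fintype Y]
    (P₁ P₂ : Y → ℝ)
    (hP₁ : ∀ y, 0 ≤ P₁ y) (hP₁sum : ∑ y, P₁ y = 1)
    (hP₂ : ∀ y, 0 ≤ P₂ y) (hP₂sum : ∑ y, P₂ y = 1)
    (hne : P₁ ≠ P₂)
    (Q : Y → ℝ)
    (hQ : ∀ y, Q y = (Real.exp 1)⁻¹ * P₁ y + (1 - (Real.exp 1)⁻¹) * P₂ y) :
    0 < (∑ y, P₁ y * Real.log (P₁ y / Q y))
        - ∑ y, P₂ y * Real.log (P₂ y / Q y) := by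
  obtain ⟨y₀, hy₀ne, hy₀pos⟩ : ∃ y, P₁ y ≠ P₂ y ∧ 0 < P₂ y := by
    by_contra hcon
    push_neg at hcon
    have hle : ∀ y ∈ Finset.univ, P₂ y ≤ P₁ y := by
      intro y _
      by_cases hy : P₁ y = P₂ y
      · exact le_of_eq hy.symm
      · have h0 : P₂ y = 0 := le_antisymm (hcon y hy) (hP₂ y)
        rw [h0]; exact hP₁ y
    obtain ⟨y1, hy1⟩ := Function.ne_iff.mp hne
    have h0 : P₂ y1 = 0 := le_antisymm (hcon y1 hy1) (hP₂ y1)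
    have hstrict : P₂ y1 < P₁ y1 := by
      rw [h0]
      rcases (hP₁ y1).lt_or_eq with h | h
      · exact h
      · exact absurd (h0 ▸ h.symm) hy1
    have := Finset.sum_lt_sum hle ⟨y1, Finset.mem_univ y1, hstrict⟩
    rw [hP₁sum, hP₂sum] at this
    exact lt_irrefl 1 this
  have key_le : ∀ y ∈ Finset.univ, P₁ y - P₂ y ≤
      P₁ y * Real.log (P₁ y / Q y) - P₂ y * Real.log (P₂ y / Q y) := by
    intro y _
    rw [hQ y]
    exact pointwise_le (hP₁ y) (hP₂ y)
  have key_lt : P₁ y₀ - P₂ y₀ <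
      P₁ y₀ * Real.log (P₁ y₀ / Q y₀) - P₂ y₀ * Real.log (P₂ y₀ / Q y₀) := by
    rw [hQ y₀]
    exact pointwise_lt (hP₁ y₀) hy₀pos hy₀ne
  have hsum := Finset.sum_lt_sum key_le ⟨y₀, Finset.mem_univ y₀, key_lt⟩
  rw [Finset.sum_sub_distrib, Finset.sum_sub_distrib, hP₁sum, hP₂sum] at hsum
  linarith
end

section
/- Let $P_1$ and $P_2$ be probability distributions on a finite set $\mathcal{Y}$ with $P_1 \ne P_2$, and for $\alpha \in [0,1]$ let $Q_\alpha(y) = \alpha P_1(y) + (1-\alpha) P_2(y)$ and $I(\alpha) = \sum_{y \in \mathcal{Y}} \big[ \alpha P_1(y) \log\frac{P_1(y)}{Q_\alpha(y)} + (1-\alpha) P_2(y) \log\frac{P_2(y)}{Q_\alpha(y)} \big]$. Let $\rho \in [0, 1/e]$. Then the maximum of $I(\alpha)$ over $\alpha \in [0, \rho]$ is attained uniquely at $\alpha^* = \rho$; that is, for every $\alpha \in [0, \rho)$ one has $I(\alpha) < I(\rho)$. -/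
open BigOperators

/-- Splitting identity for a single per-letter mutual-information term. -/
lemma Tid (β p1 p2 : ℝ) (hb0 : 0 ≤ β) (hb1 : β ≤ 1) (h1 : 0 ≤ p1) (h2 : 0 ≤ p2) :
    β * p1 * Real.log (p1 / (β * p1 + (1 - β) * p2))
      + (1 - β) * p2 * Real.log (p2 / (β * p1 + (1 - β) * p2))
    = β * p1 * Real.log p1 + (1 - β) * p2 * Real.log p2
      - (β * p1 + (1 - β) * p2) * Real.log (β * p1 + (1 - β) * p2) := by
  have e1 : β * p1 * Real.log (p1 / (β * p1 + (1 - β) * p2))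
      = β * p1 * Real.log p1 - β * p1 * Real.log (β * p1 + (1 - β) * p2) := by
    rcases (mul_nonneg hb0 h1).eq_or_lt with h | h
    · rw [← h]; ring
    · have hp1 : 0 < p1 := by
        rcases h1.eq_or_lt with h' | h'
        · exfalso; rw [← h'] at h; simp at h
        · exact h'
      have hq : 0 < β * p1 + (1 - β) * p2 :=
        lt_of_lt_of_le h (le_add_of_nonneg_right (mul_nonneg (by linarith) h2))
      rw [Real.log_div hp1.ne' hq.ne']; ring
  have e2 : (1 - β) * p2 * Real.log (p2 / (β * p1 + (1 - β) * p2))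
      = (1 - β) * p2 * Real.log p2 - (1 - β) * p2 * Real.log (β * p1 + (1 - β) * p2) := by
    rcases (mul_nonneg (by linarith : (0:ℝ) ≤ 1 - β) h2).eq_or_lt with h | h
    · rw [← h]; ring
    · have hp2 : 0 < p2 := by
        rcases h2.eq_or_lt with h' | h'
        · exfalso; rw [← h'] at h; simp at h
        · exact h'
      have hq : 0 < β * p1 + (1 - β) * p2 :=
        lt_of_lt_of_le h (le_add_of_nonneg_left (mul_nonneg hb0 h1))
      rw [Real.log_div hp2.ne' hq.ne']; ring
  rw [e1, e2]; ring

/-- Convexity (tangent-line) bound for `t ↦ t log t`. -/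
lemma Blem (u v : ℝ) (hu : 0 ≤ u) (hv : 0 ≤ v) (h0 : v = 0 → u = 0) :
    0 ≤ u * Real.log u - v * Real.log v + (v - u) * (Real.log v + 1) := by
  rcases hv.eq_or_lt with h | hv0
  · rw [h0 h.symm, ← h]; simp
  rcases hu.eq_or_lt with h | hu0
  · rw [← h]; simp; nlinarith [hv0]
  · have hlog : Real.log (v / u) ≤ v / u - 1 :=
      Real.log_le_sub_one_of_pos (div_pos hv0 hu0)
    rw [Real.log_div hv0.ne' hu0.ne'] at hlog
    have h2 : u * (Real.log v - Real.log u) ≤ u * (v / u - 1) :=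
      mul_le_mul_of_nonneg_left hlog hu
    have h3 : u * (v / u - 1) = v - u := by field_simp
    nlinarith [h2]

/-- Derivative of the per-letter gap function `G`. -/
lemma G_hasDeriv (r p2 : ℝ) (hr0 : 0 < r) (hr1 : r < 1) (h2 : 0 ≤ p2) {t : ℝ} (ht : 0 < t) :
    HasDerivAt (fun s => s * Real.log s - p2 * Real.log p2
        - (s - p2) * (Real.log (r * s + (1 - r) * p2) + 1))
      (Real.log t - Real.log (r * t + (1 - r) * p2)
        - r * (t - p2) / (r * t + (1 - r) * p2)) t := by
  have hv : 0 < r * t + (1 - r) * p2 :=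
    lt_of_lt_of_le (mul_pos hr0 ht) (le_add_of_nonneg_right (mul_nonneg (by linarith) h2))
  have d1 : HasDerivAt (fun s : ℝ => s * Real.log s) (Real.log t + 1) t :=
    Real.hasDerivAt_mul_log ht.ne'
  have d2 : HasDerivAt (fun s : ℝ => r * s + (1 - r) * p2) r t := by
    simpa using ((hasDerivAt_id t).const_mul r).add_const ((1 - r) * p2)
  have d3 : HasDerivAt (fun s : ℝ => Real.log (r * s + (1 - r) * p2))
      (r / (r * t + (1 - r) * p2)) t := d2.log hv.ne'
  have d4 : HasDerivAt (fun s : ℝ => (s - p2) * (Real.log (r * s + (1 - r) * p2) + 1))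
      (1 * (Real.log (r * t + (1 - r) * p2) + 1)
        + (t - p2) * (r / (r * t + (1 - r) * p2))) t :=
    ((hasDerivAt_id t).sub_const p2).mul (d3.add_const 1)
  have := (d1.sub_const (p2 * Real.log p2)).sub d4
  refine this.congr_deriv ?_
  ring

/-- The derivative is negative for `0 < t < p2` (needs `r < 1/2`). -/
lemma Gderiv_neg (r p2 t : ℝ) (hr0 : 0 < r) (hr2 : r < 1/2) (ht0 : 0 < t) (htp : t < p2) :
    Real.log t - Real.log (r * t + (1 - r) * p2)
      - r * (t - p2) / (r * t + (1 - r) * p2) < 0 := by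
  set v := r * t + (1 - r) * p2 with hvdef
  have hv : 0 < v := by
    have : 0 < r * t := mul_pos hr0 ht0
    nlinarith
  have h1 : Real.log (t / v) ≤ t / v - 1 := Real.log_le_sub_one_of_pos (div_pos ht0 hv)
  rw [Real.log_div ht0.ne' hv.ne'] at h1
  have key : t / v - 1 - r * (t - p2) / v < 0 := by
    have : t / v - 1 - r * (t - p2) / v = (1 - 2*r) * (t - p2) / v := by
      field_simp; ring
    rw [this]
    apply div_neg_of_neg_of_pos _ hv
    exact mul_neg_of_pos_of_neg (by linarith) (by linarith)
  linarith

/-- The derivative is positive for `t > p2 > 0` (needs `log r ≤ -1`). -/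
lemma Gderiv_pos (r p2 t : ℝ) (hr0 : 0 < r) (hr1 : r < 1) (hrlog : Real.log r ≤ -1)
    (hp2 : 0 < p2) (htp : p2 < t) :
    0 < Real.log t - Real.log (r * t + (1 - r) * p2)
      - r * (t - p2) / (r * t + (1 - r) * p2) := by
  set v := r * t + (1 - r) * p2 with hvdef
  have ht0 : 0 < t := lt_trans hp2 htp
  have hv : 0 < v := by
    have h1 : 0 < r * t := mul_pos hr0 ht0
    have h2 : 0 ≤ (1 - r) * p2 := mul_nonneg (by linarith) hp2.le
    nlinarith
  have hvt : v < t := by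
    have : t - v = (1 - r) * (t - p2) := by rw [hvdef]; ring
    nlinarith
  rcases le_or_gt (r^2 * t) ((1 - r)^2 * p2) with hcase | hcase
  · -- small t regime
    have h1 : Real.log (v / t) < v / t - 1 := by
      apply Real.log_lt_sub_one_of_pos (div_pos hv ht0)
      intro h
      have : v = t := by field_simp at h; linarith
      linarith
    rw [Real.log_div hv.ne' ht0.ne'] at h1
    have h2 : r * (t - p2) / v ≤ 1 - v / t := by
      have e : 1 - v / t = (t - v) / t := by field_simp
      rw [e, div_le_div_iff₀ hv ht0, hvdef]
      nlinarith [mul_nonneg (sub_pos.2 htp).le (sub_nonneg.2 hcase)]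
    have h3 : 1 - v / t < Real.log t - Real.log v := by linarith
    linarith
  · -- large t regime
    have hrt : (0:ℝ) < r * t := mul_pos hr0 ht0
    have hx : 0 < (1 - r) * p2 / (r * t) := div_pos (mul_pos (by linarith) hp2) hrt
    have hone : (1:ℝ) < 1 + (1 - r) * p2 / (r * t) := by linarith
    have hlog1 : Real.log (1 + (1 - r) * p2 / (r * t)) < (1 - r) * p2 / (r * t) := by
      have h := Real.log_lt_sub_one_of_pos (by linarith) (ne_of_gt hone)
      linarith
    have hvsplit : v = (r * t) * (1 + (1 - r) * p2 / (r * t)) := by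
      rw [hvdef]; field_simp
    have hlogv : Real.log v = Real.log r + Real.log t
        + Real.log (1 + (1 - r) * p2 / (r * t)) := by
      rw [hvsplit, Real.log_mul hrt.ne' (by linarith), Real.log_mul hr0.ne' ht0.ne']
    have h4 : Real.log v < -1 + Real.log t + (1 - r) * p2 / (r * t) := by
      rw [hlogv]; linarith
    have h5 : r * (t - p2) / v ≤ 1 - (1 - r) * p2 / (r * t) := by
      have hrp2v : r * (t - p2) / v = 1 - p2 / v := by
        rw [eq_sub_iff_add_eq, ← add_div, div_eq_one_iff_eq hv.ne', hvdef]; ring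
      rw [hrp2v]
      have h6 : (1 - r) * p2 / (r * t) ≤ p2 / v := by
        rw [div_le_div_iff₀ hrt hv, hvdef]
        nlinarith [mul_pos hp2 (sub_pos.2 hcase)]
      linarith
    linarith

/-- Strict positivity of the gap `H` when `p2 > 0` and `p1 ≠ p2`. -/
lemma Hpos_strict (r p1 p2 : ℝ) (hr0 : 0 < r) (hre : r ≤ (Real.exp 1)⁻¹)
    (h1 : 0 ≤ p1) (hp2 : 0 < p2) (hne : p1 ≠ p2) :
    0 < p1 * Real.log p1 - p2 * Real.log p2
      - (p1 - p2) * (Real.log (r * p1 + (1 - r) * p2) + 1) := by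
  have hexp2 : (2:ℝ) < Real.exp 1 := by
    have := Real.exp_one_gt_d9; linarith
  have hre2 : (Real.exp 1)⁻¹ < 1/2 := by
    rw [inv_lt_comm₀ (by linarith) (by norm_num)]
    linarith
  have hr2 : r < 1/2 := lt_of_le_of_lt hre hre2
  have hr1 : r < 1 := by linarith
  have hrlog : Real.log r ≤ -1 := by
    have h := Real.log_le_log hr0 hre
    rwa [Real.log_inv, Real.log_exp] at h
  set G : ℝ → ℝ := fun s => s * Real.log s - p2 * Real.log p2
      - (s - p2) * (Real.log (r * s + (1 - r) * p2) + 1) with hGdef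
  have hGp2 : G p2 = 0 := by simp [hGdef]
  rcases h1.eq_or_lt with hp1 | hp1
  · -- p1 = 0
    have hlog1r : -1 < Real.log (1 - r) := by
      have hlt : (Real.exp 1)⁻¹ < 1 - r := by
        have : (Real.exp 1)⁻¹ < 1/2 := hre2
        linarith
      have := Real.log_lt_log (by positivity) hlt
      rwa [Real.log_inv, Real.log_exp] at this
    rw [← hp1]
    have e : Real.log (r * 0 + (1 - r) * p2) = Real.log (1 - r) + Real.log p2 := by
      rw [show r * 0 + (1 - r) * p2 = (1 - r) * p2 by ring,
        Real.log_mul (by linarith) hp2.ne']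
    rw [e]
    simp only [Real.log_zero]
    nlinarith [mul_pos hp2 (by linarith : (0:ℝ) < Real.log (1 - r) + 1)]
  · -- p1 > 0
    rcases lt_or_gt_of_ne hne with hlt | hgt
    · -- p1 < p2 : G strictly decreasing on [p1, p2]
      have hanti : StrictAntiOn G (Set.Icc p1 p2) := by
        apply strictAntiOn_of_deriv_neg (convex_Icc p1 p2)
        · intro x hx
          exact (G_hasDeriv r p2 hr0 hr1 hp2.le
            (lt_of_lt_of_le hp1 hx.1)).continuousAt.continuousWithinAt
        · intro x hx
          rw [interior_Icc] at hx
          rw [(G_hasDeriv r p2 hr0 hr1 hp2.le (lt_trans hp1 hx.1)).deriv]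
          exact Gderiv_neg r p2 x hr0 hr2 (lt_trans hp1 hx.1) hx.2
      have := hanti (Set.left_mem_Icc.2 hlt.le) (Set.right_mem_Icc.2 hlt.le) hlt
      rw [hGp2] at this
      exact this
    · -- p1 > p2 : G strictly increasing on [p2, p1]
      have hmono : StrictMonoOn G (Set.Icc p2 p1) := by
        apply strictMonoOn_of_deriv_pos (convex_Icc p2 p1)
        · intro x hx
          exact (G_hasDeriv r p2 hr0 hr1 hp2.le
            (lt_of_lt_of_le hp2 hx.1)).continuousAt.continuousWithinAt
        · intro x hx
          rw [interior_Icc] at hx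
          rw [(G_hasDeriv r p2 hr0 hr1 hp2.le (lt_trans hp2 hx.1)).deriv]
          exact Gderiv_pos r p2 x hr0 hr1 hrlog hp2 hx.1
      have := hmono (Set.left_mem_Icc.2 hgt.le) (Set.right_mem_Icc.2 hgt.le) hgt
      rw [hGp2] at this
      exact this

/-- Nonnegativity of the gap `H`. -/
lemma Hpos (r p1 p2 : ℝ) (hr0 : 0 < r) (hre : r ≤ (Real.exp 1)⁻¹)
    (h1 : 0 ≤ p1) (h2 : 0 ≤ p2) :
    0 ≤ p1 * Real.log p1 - p2 * Real.log p2
      - (p1 - p2) * (Real.log (r * p1 + (1 - r) * p2) + 1) := by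
  have hrlog : Real.log r ≤ -1 := by
    have h := Real.log_le_log hr0 hre
    rwa [Real.log_inv, Real.log_exp] at h
  rcases h2.eq_or_lt with hp2 | hp2
  · rw [← hp2]
    rcases h1.eq_or_lt with hp1 | hp1
    · rw [← hp1]; simp
    · have e : Real.log (r * p1 + (1 - r) * 0) = Real.log r + Real.log p1 := by
        rw [show r * p1 + (1 - r) * 0 = r * p1 by ring, Real.log_mul hr0.ne' hp1.ne']
      rw [e]
      simp only [Real.log_zero]
      nlinarith [mul_nonneg hp1.le (by linarith : (0:ℝ) ≤ -(Real.log r + 1))]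
  · rcases eq_or_ne p1 p2 with hne | hne
    · rw [hne, show r * p2 + (1 - r) * p2 = p2 by ring]; ring_nf; exact le_refl 0
    · exact (Hpos_strict r p1 p2 hr0 hre h1 hp2 hne).le

/-- Per-letter comparison between the information terms at `r` and at `a < r`. -/
lemma perLetter (r a p1 p2 : ℝ) (ha0 : 0 ≤ a) (har : a < r) (hr1 : r < 1)
    (h1 : 0 ≤ p1) (h2 : 0 ≤ p2) :
    (r - a) * (p1 * Real.log p1 - p2 * Real.log p2
        - (p1 - p2) * (Real.log (r * p1 + (1 - r) * p2) + 1))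
      ≤ (r * p1 * Real.log (p1 / (r * p1 + (1 - r) * p2))
          + (1 - r) * p2 * Real.log (p2 / (r * p1 + (1 - r) * p2)))
        - (a * p1 * Real.log (p1 / (a * p1 + (1 - a) * p2))
          + (1 - a) * p2 * Real.log (p2 / (a * p1 + (1 - a) * p2))) := by
  have hr0 : 0 < r := lt_of_le_of_lt ha0 har
  have hTr := Tid r p1 p2 hr0.le hr1.le h1 h2
  have hTa := Tid a p1 p2 ha0 (by linarith) h1 h2
  have hu : 0 ≤ a * p1 + (1 - a) * p2 :=
    add_nonneg (mul_nonneg ha0 h1) (mul_nonneg (by linarith) h2)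
  have hv : 0 ≤ r * p1 + (1 - r) * p2 :=
    add_nonneg (mul_nonneg hr0.le h1) (mul_nonneg (by linarith) h2)
  have h0 : r * p1 + (1 - r) * p2 = 0 → a * p1 + (1 - a) * p2 = 0 := by
    intro h
    have e1 : r * p1 = 0 := by nlinarith [mul_nonneg hr0.le h1, mul_nonneg (by linarith : (0:ℝ) ≤ 1 - r) h2]
    have e2 : (1 - r) * p2 = 0 := by nlinarith [mul_nonneg hr0.le h1, mul_nonneg (by linarith : (0:ℝ) ≤ 1 - r) h2]
    have hp1 : p1 = 0 := by
      rcases mul_eq_zero.1 e1 with h' | h'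
      · exact absurd h' hr0.ne'
      · exact h'
    have hp2 : p2 = 0 := by
      rcases mul_eq_zero.1 e2 with h' | h'
      · exact absurd h' (by intro hh; linarith : (1 - r) ≠ 0)
      · exact h'
    rw [hp1, hp2]; ring
  have hB := Blem (a * p1 + (1 - a) * p2) (r * p1 + (1 - r) * p2) hu hv h0
  rw [hTr, hTa]
  have key : (r * p1 * Real.log p1 + (1 - r) * p2 * Real.log p2
      - (r * p1 + (1 - r) * p2) * Real.log (r * p1 + (1 - r) * p2))
      - (a * p1 * Real.log p1 + (1 - a) * p2 * Real.log p2
      - (a * p1 + (1 - a) * p2) * Real.log (a * p1 + (1 - a) * p2))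
      - (r - a) * (p1 * Real.log p1 - p2 * Real.log p2
        - (p1 - p2) * (Real.log (r * p1 + (1 - r) * p2) + 1))
      = (a * p1 + (1 - a) * p2) * Real.log (a * p1 + (1 - a) * p2)
        - (r * p1 + (1 - r) * p2) * Real.log (r * p1 + (1 - r) * p2)
        + ((r * p1 + (1 - r) * p2) - (a * p1 + (1 - a) * p2))
          * (Real.log (r * p1 + (1 - r) * p2) + 1) := by ring
  linarith

/-- Cost-constrained binary input: for a binary-input channel with distinct rows
`P₁ ≠ P₂` and mutual information `I(α)`, if `ρ ∈ [0, 1/e]`, then the maximum of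
`I` over `[0, ρ]` is attained uniquely at `ρ`: for every `α ∈ [0, ρ)`,
`I(α) < I(ρ)`. -/
theorem cost_constrained_max_at_rho {Y : Type*} [Fintype Y]
    (P₁ P₂ : Y → ℝ)
    (hP₁ : ∀ y, 0 ≤ P₁ y) (hP₁sum : ∑ y, P₁ y = 1)
    (hP₂ : ∀ y, 0 ≤ P₂ y) (hP₂sum : ∑ y, P₂ y = 1)
    (hne : P₁ ≠ P₂)
    (Q : ℝ → Y → ℝ) (hQ : ∀ α y, Q α y = α * P₁ y + (1 - α) * P₂ y)
    (I : ℝ → ℝ)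
    (hI : ∀ α, I α = ∑ y, (α * P₁ y * Real.log (P₁ y / Q α y)
      + (1 - α) * P₂ y * Real.log (P₂ y / Q α y)))
    (ρ : ℝ) (hρ : ρ ∈ Set.Icc (0 : ℝ) (Real.exp 1)⁻¹) :
    ∀ α ∈ Set.Ico (0 : ℝ) ρ, I α < I ρ := by
  rintro α ⟨hα0, hαρ⟩
  have hρ0 : 0 < ρ := lt_of_le_of_lt hα0 hαρ
  have hρe : ρ ≤ (Real.exp 1)⁻¹ := hρ.2
  have hexp2 : (2:ℝ) < Real.exp 1 := by
    have := Real.exp_one_gt_d9; linarith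
  have hρ1 : ρ < 1 := by
    have h1 : (Real.exp 1)⁻¹ < 1 := by
      rw [inv_lt_comm₀ (by linarith) (by norm_num)]
      linarith
    linarith
  -- the gap function
  set H : Y → ℝ := fun y => P₁ y * Real.log (P₁ y) - P₂ y * Real.log (P₂ y)
      - (P₁ y - P₂ y) * (Real.log (ρ * P₁ y + (1 - ρ) * P₂ y) + 1) with hHdef
  -- there is a letter with positive gap
  have hex : ∃ y, 0 < H y := by
    by_contra hcon
    push_neg at hcon
    have hall : ∀ y, 0 < P₂ y → P₁ y = P₂ y := by
      intro y hy
      by_contra hne'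
      exact absurd (Hpos_strict ρ (P₁ y) (P₂ y) hρ0 hρe (hP₁ y) hy hne')
        (not_lt.2 (hcon y))
    have hle : ∀ y ∈ Finset.univ, P₂ y ≤ P₁ y := by
      intro y _
      rcases (hP₂ y).eq_or_lt with h | h
      · rw [← h]; exact hP₁ y
      · rw [hall y h]
    have heq : ∀ y, P₁ y = P₂ y := by
      intro y
      by_contra hne'
      have hlt : P₂ y < P₁ y := lt_of_le_of_ne (hle y (Finset.mem_univ y)) (Ne.symm hne')
      have := Finset.sum_lt_sum hle ⟨y, Finset.mem_univ y, hlt⟩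
      rw [hP₁sum, hP₂sum] at this
      exact lt_irrefl 1 this
    exact hne (funext heq)
  obtain ⟨y₀, hy₀⟩ := hex
  have hsumH : 0 < ∑ y, H y :=
    Finset.sum_pos' (fun y _ => Hpos ρ (P₁ y) (P₂ y) hρ0 hρe (hP₁ y) (hP₂ y))
      ⟨y₀, Finset.mem_univ y₀, hy₀⟩
  have hper : ∀ y ∈ Finset.univ,
      (ρ - α) * H y ≤
        (ρ * P₁ y * Real.log (P₁ y / (ρ * P₁ y + (1 - ρ) * P₂ y))
          + (1 - ρ) * P₂ y * Real.log (P₂ y / (ρ * P₁ y + (1 - ρ) * P₂ y)))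
        - (α * P₁ y * Real.log (P₁ y / (α * P₁ y + (1 - α) * P₂ y))
          + (1 - α) * P₂ y * Real.log (P₂ y / (α * P₁ y + (1 - α) * P₂ y))) :=
    fun y _ => perLetter ρ α (P₁ y) (P₂ y) hα0 hαρ hρ1 (hP₁ y) (hP₂ y)
  have hsum := Finset.sum_le_sum hper
  rw [← Finset.mul_sum] at hsum
  have hpos : 0 < (ρ - α) * ∑ y, H y := mul_pos (by linarith) hsumH
  have hsplit : ∑ y, ((ρ * P₁ y * Real.log (P₁ y / (ρ * P₁ y + (1 - ρ) * P₂ y))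
          + (1 - ρ) * P₂ y * Real.log (P₂ y / (ρ * P₁ y + (1 - ρ) * P₂ y)))
        - (α * P₁ y * Real.log (P₁ y / (α * P₁ y + (1 - α) * P₂ y))
          + (1 - α) * P₂ y * Real.log (P₂ y / (α * P₁ y + (1 - α) * P₂ y))))
      = (∑ y, (ρ * P₁ y * Real.log (P₁ y / (ρ * P₁ y + (1 - ρ) * P₂ y))
          + (1 - ρ) * P₂ y * Real.log (P₂ y / (ρ * P₁ y + (1 - ρ) * P₂ y))))
        - ∑ y, (α * P₁ y * Real.log (P₁ y / (α * P₁ y + (1 - α) * P₂ y))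
          + (1 - α) * P₂ y * Real.log (P₂ y / (α * P₁ y + (1 - α) * P₂ y))) :=
    Finset.sum_sub_distrib _ _
  rw [hsplit] at hsum
  have hIρ : I ρ = ∑ y, (ρ * P₁ y * Real.log (P₁ y / (ρ * P₁ y + (1 - ρ) * P₂ y))
      + (1 - ρ) * P₂ y * Real.log (P₂ y / (ρ * P₁ y + (1 - ρ) * P₂ y))) := by
    rw [hI ρ]
    exact Finset.sum_congr rfl (fun y _ => by rw [hQ ρ y])
  have hIα : I α = ∑ y, (α * P₁ y * Real.log (P₁ y / (α * P₁ y + (1 - α) * P₂ y))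
      + (1 - α) * P₂ y * Real.log (P₂ y / (α * P₁ y + (1 - α) * P₂ y))) := by
    rw [hI α]
    exact Finset.sum_congr rfl (fun y _ => by rw [hQ α y])
  rw [hIρ, hIα]
  linarith
end

section
/- The bound $1 - \frac{1}{e}$ on the maximum symbol probability of a capacity achieving input distribution is tight: for every $\epsilon > 0$ there exist a binary-input binary-output discrete memoryless channel $(\{0,1\}, W(y|x), \{0,1\})$ with positive capacity and a capacity achieving input distribution $P^*$ such that $\max_{x \in \{0,1\}} P^*(x) > 1 - \frac{1}{e} - \epsilon$. -/
set_option maxHeartbeats 1000000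

open BigOperators

/-- Tightness of the `1 - 1/e` bound: for every `ε > 0` there is a binary-input
binary-output DMC with positive capacity and a capacity achieving input
distribution `Pstar` one of whose entries exceeds `1 - 1/e - ε`. -/
theorem one_sub_inv_e_bound_tight (ε : ℝ) (hε : 0 < ε) :
    ∃ (W : Fin 2 → Fin 2 → ℝ) (Pstar : Fin 2 → ℝ),
      (∀ x y, 0 ≤ W x y) ∧ (∀ x, ∑ y, W x y = 1) ∧
      (∀ x, 0 ≤ Pstar x) ∧ (∑ x, Pstar x = 1) ∧
      (∀ P : Fin 2 → ℝ, (∀ x, 0 ≤ P x) → ∑ x, P x = 1 →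
        (∑ x, ∑ y, P x * W x y * Real.log (W x y / ∑ x', P x' * W x' y))
          ≤ ∑ x, ∑ y, Pstar x * W x y * Real.log (W x y / ∑ x', Pstar x' * W x' y)) ∧
      (0 < ∑ x, ∑ y, Pstar x * W x y * Real.log (W x y / ∑ x', Pstar x' * W x' y)) ∧
      (∃ x, 1 - (Real.exp 1)⁻¹ - ε < Pstar x) := by
  have he1 : (0:ℝ) < Real.exp 1 := Real.exp_pos 1
  obtain ⟨L, hLeq⟩ : ∃ L : ℝ, L = Real.log (1 + Real.exp 1 * ε) := ⟨_, rfl⟩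
  have hL0 : 0 < L := by rw [hLeq]; exact Real.log_pos (by nlinarith)
  obtain ⟨δ, hδeq⟩ : ∃ δ : ℝ, δ = min (1/2 : ℝ) (L / 2) := ⟨_, rfl⟩
  have hδ0 : 0 < δ := by rw [hδeq]; exact lt_min (by norm_num) (by linarith)
  have hδhalf : δ ≤ 1/2 := by rw [hδeq]; exact min_le_left _ _
  have hδL : δ < L := by
    rw [hδeq]; exact lt_of_le_of_lt (min_le_right _ _) (by linarith)
  obtain ⟨a, haeq⟩ : ∃ a : ℝ, a = 1 - δ := ⟨_, rfl⟩
  have ha0 : 0 < a := by rw [haeq]; linarith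
  have ha1 : a < 1 := by rw [haeq]; linarith
  have hsum1 : a + δ = 1 := by rw [haeq]; ring
  have hla : Real.log a < -δ := by
    have h := Real.log_lt_sub_one_of_pos ha0 (ne_of_lt ha1)
    linarith [h, haeq]
  obtain ⟨t, hteq⟩ : ∃ t : ℝ, t = -(a * Real.log a) / δ := ⟨_, rfl⟩
  have hδt : δ * t = -(a * Real.log a) := by
    rw [hteq]; field_simp
  have hta : a < t := by
    rw [hteq, lt_div_iff₀ hδ0]
    nlinarith
  obtain ⟨E, hEeq⟩ : ∃ E : ℝ, E = Real.exp t := ⟨_, rfl⟩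
  have hEpos : 0 < E := by rw [hEeq]; positivity
  have hEa : Real.exp a < E := by rw [hEeq]; exact Real.exp_lt_exp.mpr hta
  have hE1 : 1 < E := by
    have h := Real.add_one_le_exp a
    linarith
  obtain ⟨s, hseq⟩ : ∃ s : ℝ, s = (δ + E)⁻¹ := ⟨_, rfl⟩
  have hden : (0:ℝ) < δ + E := by linarith
  have hs0 : 0 < s := by rw [hseq]; positivity
  have hs1 : s * (δ + E) = 1 := by rw [hseq]; field_simp
  have hslt1 : s < 1 := by
    rw [hseq]; apply inv_lt_one_of_one_lt₀; linarith
  have hsexp : s < Real.exp (-a) := by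
    have h1 : Real.exp a < δ + E := by linarith
    have h2 := inv_strictAnti₀ (Real.exp_pos a) h1
    rw [← Real.exp_neg] at h2
    rw [hseq]; exact h2
  have hexpδ : Real.exp δ < 1 + Real.exp 1 * ε := by
    calc Real.exp δ < Real.exp L := Real.exp_lt_exp.mpr hδL
    _ = 1 + Real.exp 1 * ε := by rw [hLeq]; exact Real.exp_log (by nlinarith)
  have hsmall : s < (Real.exp 1)⁻¹ + ε := by
    have h2 : Real.exp (-a) = Real.exp δ * (Real.exp 1)⁻¹ := by
      rw [← Real.exp_neg, ← Real.exp_add]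
      congr 1
      linarith
    have hi : (0:ℝ) < (Real.exp 1)⁻¹ := by positivity
    have h3 : Real.exp δ * (Real.exp 1)⁻¹ < (1 + Real.exp 1 * ε) * (Real.exp 1)⁻¹ := by
      nlinarith
    have h4 : (1 + Real.exp 1 * ε) * (Real.exp 1)⁻¹ = (Real.exp 1)⁻¹ + ε := by
      field_simp
    nlinarith [hsexp]
  -- output distribution facts
  have hO0 : 1 - s + s * a = s * E := by
    linear_combination s * haeq + (-1 : ℝ) * hs1
  have hO0pos : (0:ℝ) < s * E := by positivity
  have hO0lt1 : s * E < 1 := by nlinarith [hs1]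
  have hlogO0 : Real.log (s * E) = Real.log s + t := by
    rw [Real.log_mul (ne_of_gt hs0) (ne_of_gt hEpos), hEeq, Real.log_exp]
  obtain ⟨C, hCeq⟩ : ∃ C : ℝ, C = -(Real.log s + t) := ⟨_, rfl⟩
  have hC0 : 0 < C := by
    have h := Real.log_neg hO0pos hO0lt1
    rw [hlogO0] at h; rw [hCeq]; linarith
  -- value of the mutual information at Pstar
  have hRHSval :
      -((1 - s) * Real.log (1 - s + s * a)) + (s * a * Real.log (a / (1 - s + s * a))
        + s * δ * Real.log (δ / (s * δ))) = C := by
    rw [hO0]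
    rw [Real.log_div (ne_of_gt ha0) (ne_of_gt hO0pos),
        Real.log_div (ne_of_gt hδ0) (by positivity),
        Real.log_mul (ne_of_gt hs0) (ne_of_gt hδ0), hlogO0, hCeq]
    linear_combination s * hδt - s * (Real.log s + t) * hsum1
  -- pointwise inequality  y - x ≤ y*(log y - log x)
  have key : ∀ x y : ℝ, 0 < x → 0 < y → y - x ≤ y * (Real.log y - Real.log x) := by
    intro x y hx hy
    have h := Real.log_le_sub_one_of_pos (show 0 < x / y by positivity)
    rw [Real.log_div (ne_of_gt hx) (ne_of_gt hy)] at h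
    have h2 := mul_le_mul_of_nonneg_left h (le_of_lt hy)
    have h3 : y * (x / y - 1) = x - y := by field_simp
    linarith [h2, h3]
  refine ⟨![![1, 0], ![a, δ]], ![1 - s, s], ?_, ?_, ?_, ?_, ?_, ?_, ?_⟩
  · intro x y
    fin_cases x <;> fin_cases y <;> simp <;> linarith
  · intro x
    fin_cases x <;> simp [Fin.sum_univ_two] <;> linarith
  · intro x
    fin_cases x <;> simp <;> linarith
  · simp [Fin.sum_univ_two]
  · -- maximality
    intro P hP hPs
    simp only [Fin.sum_univ_two, Matrix.cons_val_zero, Matrix.cons_val_one,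
      Matrix.head_cons] at hPs ⊢
    norm_num
    rcases eq_or_lt_of_le (hP 1) with hp1 | hp1
    · -- P 1 = 0
      have hp1' : P 1 = 0 := hp1.symm
      have hp0 : P 0 = 1 := by linarith
      rw [hp1', hp0]
      norm_num
      linarith [hRHSval, hC0]
    · -- P 1 > 0
      have hR0 : 0 < P 0 + P 1 * a := by
        have := mul_pos hp1 ha0
        linarith [hP 0]
      have hR1 : 0 < P 1 * δ := by positivity
      rw [Real.log_div (ne_of_gt ha0) (ne_of_gt hR0),
          Real.log_div (ne_of_gt hδ0) (ne_of_gt hR1)]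
      have hA := key (s * E) (P 0 + P 1 * a) hO0pos hR0
      have hB := key (s * δ) (P 1 * δ) (by positivity) hR1
      rw [hlogO0] at hA
      rw [Real.log_mul (ne_of_gt hs0) (ne_of_gt hδ0)] at hB
      have hsum : s * E + s * δ = 1 := by linear_combination hs1
      have hp0 : P 0 = 1 - P 1 := by linarith
      have hR01 : (P 0 + P 1 * a) + P 1 * δ = 1 := by
        linear_combination (P 1) * hsum1 + hPs
      have hid : C - (-(P 0 * Real.log (P 0 + P 1 * a))
            + (P 1 * a * (Real.log a - Real.log (P 0 + P 1 * a))
              + P 1 * δ * (Real.log δ - Real.log (P 1 * δ))))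
          = (P 0 + P 1 * a) * (Real.log (P 0 + P 1 * a) - (Real.log s + t))
            + (P 1 * δ) * (Real.log (P 1 * δ) - (Real.log s + Real.log δ)) := by
        rw [hCeq]
        linear_combination (Real.log s + t) * hp0 + (Real.log s + t) * (P 1) * haeq
          + (-(P 1)) * hδt
      linarith [hA, hB, hid, hR01, hsum, hRHSval]
  · simp only [Fin.sum_univ_two, Matrix.cons_val_zero, Matrix.cons_val_one, Matrix.head_cons]
    norm_num
    linarith [hRHSval, hC0]
  · exact ⟨0, by simp; linarith [hsmall]⟩
end

section
/- For every $c \in [0,1]$, one has $\log\frac{e}{1 + (e-1)c} - c \log\frac{c\, e}{1 + (e-1)c} - (1 - c) \ge 0$; equivalently, $f(1/e; 1, c) \ge 0$ where $f(\alpha; p_1, p_2) = p_1 \log\frac{p_1}{\alpha p_1 + (1-\alpha)p_2} - p_2 \log\frac{p_2}{\alpha p_1 + (1-\alpha)p_2} - (p_1 - p_2)$. -/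
open BigOperators

lemma key_poly_le_exp (c : ℝ) (h0 : 0 ≤ c) (h1 : c ≤ 1) :
    1 + (Real.exp 1 - 2) * c + c ^ 2 ≤ Real.exp c := by
  have he1 : Real.exp 1 < 2.7182818286 := Real.exp_one_lt_d9
  have he2 : 2.7182818283 < Real.exp 1 := Real.exp_one_gt_d9
  rcases le_or_gt c (1 / 2) with h | h
  · have hq : 1 + c + c ^ 2 / 2 ≤ Real.exp c := by
      have hs := Real.sum_le_exp_of_nonneg h0 3
      norm_num [Finset.sum_range_succ, Nat.factorial] at hs
      nlinarith [hs]
    nlinarith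
  · set t : ℝ := 1 - c with ht
    have ht0 : 0 ≤ t := by linarith
    have ht2 : t ≤ 1 / 2 := by linarith
    have hb := Real.exp_bound (x := -t) (by rw [abs_neg, abs_of_nonneg ht0]; linarith)
      (n := 4) (by norm_num)
    have hsum : ∑ i ∈ Finset.range 4, (-t) ^ i / (i.factorial : ℝ)
        = 1 - t + t ^ 2 / 2 - t ^ 3 / 6 := by
      norm_num [Finset.sum_range_succ, Nat.factorial]
      ring
    rw [hsum, abs_neg, abs_of_nonneg ht0] at hb
    have hlow : 1 - t + t ^ 2 / 2 - t ^ 3 / 6 - t ^ 4 * (5 / 96) ≤ Real.exp (-t) := by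
      have h' := (abs_le.mp hb).1
      norm_num [Nat.factorial] at h' ⊢
      linarith
    have hct : c = 1 - t := by rw [ht]; ring
    rw [hct, show (1:ℝ) - t = 1 + -t by ring, Real.exp_add]
    have hE : (0:ℝ) ≤ Real.exp 1 := (Real.exp_pos 1).le
    have h3 : t ^ 3 ≤ t ^ 2 * (1 / 2) := by nlinarith [sq_nonneg t]
    have h4 : t ^ 4 ≤ t ^ 2 * (1 / 4) := by nlinarith [sq_nonneg t, sq_nonneg (t ^ 2)]
    have hA3 : Real.exp 1 * t ^ 3 ≤ Real.exp 1 * (t ^ 2 * (1 / 2)) :=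
      mul_le_mul_of_nonneg_left h3 hE
    have hA4 : Real.exp 1 * t ^ 4 ≤ Real.exp 1 * (t ^ 2 * (1 / 4)) :=
      mul_le_mul_of_nonneg_left h4 hE
    have hA2 : 2.7182818283 * t ^ 2 ≤ Real.exp 1 * t ^ 2 :=
      mul_le_mul_of_nonneg_right he2.le (sq_nonneg t)
    have hmul : Real.exp 1 * (1 - t + t ^ 2 / 2 - t ^ 3 / 6 - t ^ 4 * (5 / 96))
        ≤ Real.exp 1 * Real.exp (-t) :=
      mul_le_mul_of_nonneg_left hlow hE
    nlinarith [hmul, hA2, hA3, hA4, sq_nonneg t]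

/-- Boundary case `p₁ = 1`: for every `c ∈ [0,1]`,
`log(e / (1 + (e-1)c)) - c log(c e / (1 + (e-1)c)) - (1 - c) ≥ 0`,
i.e. `f(1/e; 1, c) ≥ 0` (with `0 log 0 = 0`, which holds automatically since
`Real.log 0 = 0`). -/
theorem f_at_inv_e_one_nonneg (c : ℝ) (hc : c ∈ Set.Icc (0 : ℝ) 1) :
    0 ≤ Real.log (Real.exp 1 / (1 + (Real.exp 1 - 1) * c))
      - c * Real.log (c * Real.exp 1 / (1 + (Real.exp 1 - 1) * c))
      - (1 - c) := by
  obtain ⟨hc0, hc1⟩ := hc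
  have he2 : 2.7182818283 < Real.exp 1 := Real.exp_one_gt_d9
  rcases eq_or_lt_of_le hc0 with rfl | hcpos
  · simp
  · set D : ℝ := 1 + (Real.exp 1 - 1) * c with hDdef
    set M : ℝ := 1 + (Real.exp 1 - 2) * c + c ^ 2 with hMdef
    have hD : 0 < D := by nlinarith
    have hM : 0 < M := by nlinarith
    have hce : 0 < c * Real.exp 1 := mul_pos hcpos (Real.exp_pos 1)
    have hA : Real.log D - Real.log M ≤ D / M - 1 := by
      have := Real.log_le_sub_one_of_pos (div_pos hD hM)
      rwa [Real.log_div hD.ne' hM.ne'] at this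
    have hB : Real.log (c * Real.exp 1) - Real.log M ≤ c * Real.exp 1 / M - 1 := by
      have := Real.log_le_sub_one_of_pos (div_pos hce hM)
      rwa [Real.log_div hce.ne' hM.ne'] at this
    have h1A := mul_le_mul_of_nonneg_left hA (by linarith : (0:ℝ) ≤ 1 - c)
    have h1B := mul_le_mul_of_nonneg_left hB hc0
    have hz : (1 - c) * (D / M - 1) + c * (c * Real.exp 1 / M - 1) = 0 := by
      field_simp
      ring
    have hcomb : (1 - c) * Real.log D + c * Real.log (c * Real.exp 1) ≤ Real.log M := by
      nlinarith [add_le_add h1A h1B, hz]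
    have hlogM : Real.log M ≤ c :=
      (Real.log_le_iff_le_exp hM).mpr (key_poly_le_exp c hc0 hc1)
    have hlogce : Real.log (c * Real.exp 1) = Real.log c + 1 := by
      rw [Real.log_mul hcpos.ne' (Real.exp_ne_zero 1), Real.log_exp]
    have hkey : (1 - c) * Real.log D + c * Real.log c ≤ 0 := by
      rw [hlogce] at hcomb
      nlinarith [hcomb, hlogM]
    rw [Real.log_div (Real.exp_ne_zero 1) hD.ne', Real.log_div hce.ne' hD.ne',
      Real.log_exp, hlogce]
    nlinarith [hkey]
end
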